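/- arXiv:2408.13070 — 4 statements merged into one kernel-verified Lean document; each statement's English description precedes it below -/
import Mathlib

section
/- The class CF-TR is closed under taking direct products: if G₁ and G₂ are groups in CF-TR, then the direct product G₁ × G₂ is in CF-TR. -/
/-- Evaluation of a word over `A ⊕ A` in the free group. -/
def evalWord {A : Type} (w : List (A ⊕ A)) : FreeGroup A :=
  (w.map (Sum.elim (fun a => FreeGroup.of a) (fun a => (FreeGroup.of a)⁻¹))).prod

/-- The loop language of the complete inverse graph `V` at the vertex `v`. -/
def loopLang (A V : Type) [MulAction (FreeGroup A) V] (v : V) : Language (A ⊕ A) :=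
  {w | evalWord w • v = v}

/-- The kernel `K(V) = {g | ∀ v, g • v = v}` of the action of `FreeGroup A` on `V`. -/
def actionKernel (A V : Type) [MulAction (FreeGroup A) V] : Subgroup (FreeGroup A) where
  carrier := {g | ∀ v : V, g • v = v}
  one_mem' := fun v => one_smul _ v
  mul_mem' := by
    intro a b ha hb v
    rw [mul_smul, hb, ha]
  inv_mem' := by
    intro a ha v
    conv_lhs => rw [← ha v]
    rw [inv_smul_smul]

instance actionKernel_normal (A V : Type) [MulAction (FreeGroup A) V] :
    (actionKernel A V).Normal := by
  constructor
  intro n hn g v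
  rw [mul_smul, mul_smul, hn (g⁻¹ • v), smul_inv_smul]

instance iInf_actionKernel_normal (A : Type) {k : ℕ} (V : Fin k → Type)
    [∀ i, MulAction (FreeGroup A) (V i)] :
    (⨅ i, actionKernel A (V i)).Normal := by
  constructor
  intro n hn g
  rw [Subgroup.mem_iInf] at hn ⊢
  intro i
  exact (actionKernel_normal A (V i)).conj_mem n (hn i) g

/-- A group is in the class CF-TR if it is isomorphic to the transition group
`FreeGroup A ⧸ (⨅ i, K(Vᵢ))` of a finite family of nonempty, connected (pretransitive),
complete, context-free inverse graphs over a finite alphabet `A`. -/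
def IsCFTR (G : Type) [Group G] : Prop :=
  ∃ (A : Type) (_ : Finite A) (k : ℕ) (V : Fin k → Type)
    (inst : ∀ i, MulAction (FreeGroup A) (V i)),
    letI := inst
    (∀ i, Nonempty (V i)) ∧
    (∀ i, MulAction.IsPretransitive (FreeGroup A) (V i)) ∧
    (∀ i, ∃ v₀ : V i, (loopLang A (V i) v₀).IsContextFree) ∧
    Nonempty (G ≃* (FreeGroup A ⧸ ⨅ i, actionKernel A (V i)))

namespace CFTRAux

open ContextFreeGrammar Symbol

variable {T T' : Type}

section Lift

variable (g : ContextFreeGrammar.{0} T) (f : T' → Option T) (ψ : T → T')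

/-- Lift a symbol: terminals get a padding nonterminal in front. -/
def liftSym : Symbol T g.NT → List (Symbol T' (Option (Option g.NT)))
  | .terminal t => [.nonterminal (some none), .terminal (ψ t)]
  | .nonterminal n => [.nonterminal (some (some n))]

def liftStr (α : List (Symbol T g.NT)) : List (Symbol T' (Option (Option g.NT))) :=
  α.flatMap (liftSym g ψ)

lemma liftStr_append (α β : List (Symbol T g.NT)) :
    liftStr g ψ (α ++ β) = liftStr g ψ α ++ liftStr g ψ β :=
  List.flatMap_append

def projSym : Symbol T' (Option (Option g.NT)) → List (Symbol T g.NT)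
  | .terminal t' => ((f t').map Symbol.terminal).toList
  | .nonterminal none => [.nonterminal g.initial]
  | .nonterminal (some none) => []
  | .nonterminal (some (some n)) => [.nonterminal n]

def projStr (β : List (Symbol T' (Option (Option g.NT)))) : List (Symbol T g.NT) :=
  β.flatMap (projSym g f)

lemma projStr_append (α β : List (Symbol T' (Option (Option g.NT)))) :
    projStr g f (α ++ β) = projStr g f α ++ projStr g f β :=
  List.flatMap_append

lemma filterMap_eq_cons_split (hinj : ∀ t' t, f t' = some t → t' = ψ t) :
    ∀ (w : List T') (t : T) (u : List T), w.filterMap f = t :: u →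
    ∃ w₁ w₂, w = w₁ ++ ψ t :: w₂ ∧ (∀ d ∈ w₁, f d = none) ∧ w₂.filterMap f = u := by
  intro w
  induction w with
  | nil => simp
  | cons x w ih =>
    intro t u h
    rcases hx : f x with _ | t₀
    · rw [List.filterMap_cons_none hx] at h
      obtain ⟨w₁, w₂, rfl, hw₁, hw₂⟩ := ih t u h
      exact ⟨x :: w₁, w₂, rfl, by
        intro d hd
        rcases List.mem_cons.mp hd with rfl | hd
        · exact hx
        · exact hw₁ d hd, hw₂⟩
    · rw [List.filterMap_cons_some hx] at h
      obtain ⟨rfl, rfl⟩ : t₀ = t ∧ w.filterMap f = u :=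
        ⟨List.head_eq_of_cons_eq h, List.tail_eq_of_cons_eq h⟩
      exact ⟨[], w, by rw [hinj x t₀ hx]; rfl, by simp, rfl⟩

variable [Fintype T']

@[reducible] noncomputable def lifted : ContextFreeGrammar T' :=
  letI : DecidableEq (ContextFreeRule T' (Option (Option g.NT))) := Classical.decEq _
  letI : DecidablePred fun d : T' => f d = none := Classical.decPred _
  { NT := Option (Option g.NT)
    initial := none
    rules :=
      insert ⟨none, [.nonterminal (some (some g.initial)), .nonterminal (some none)]⟩
        (insert ⟨some none, []⟩
          (((Finset.univ.filter fun d : T' => f d = none).image fun d =>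
              ⟨some none, [.terminal d, .nonterminal (some none)]⟩) ∪
            g.rules.image fun r => ⟨some (some r.input), liftStr g ψ r.output⟩)) }

lemma mem_rules_iff (r : ContextFreeRule T' (Option (Option g.NT))) :
    r ∈ (lifted g f ψ).rules ↔
      r = ⟨none, [.nonterminal (some (some g.initial)), .nonterminal (some none)]⟩ ∨
      r = ⟨some none, []⟩ ∨
      (∃ d, f d = none ∧
        (⟨some none, [.terminal d, .nonterminal (some none)]⟩ :
          ContextFreeRule T' (Option (Option g.NT))) = r) ∨
      (∃ r₀ ∈ g.rules,
        (⟨some (some r₀.input), liftStr g ψ r₀.output⟩ :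
          ContextFreeRule T' (Option (Option g.NT))) = r) := by
  unfold lifted
  simp only [Finset.mem_insert, Finset.mem_union, Finset.mem_image, Finset.mem_filter, Finset.mem_univ, true_and]

lemma pad_derives (w : List T') (hw : ∀ d ∈ w, f d = none) :
    (lifted g f ψ).Derives [.nonterminal (some none)] (w.map .terminal) := by
  induction w with
  | nil =>
    have hstep : (lifted g f ψ).Produces [.nonterminal (some none)]
        (List.map Symbol.terminal []) := by
      refine ⟨⟨some none, []⟩, ?_, ?_⟩
      · rw [mem_rules_iff]; tauto
      · exact ContextFreeRule.Rewrites.input_output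
    exact hstep.single
  | cons d w ih =>
    have hstep : (lifted g f ψ).Produces [.nonterminal (some none)]
        [.terminal d, .nonterminal (some none)] := by
      refine ⟨⟨some none, [.terminal d, .nonterminal (some none)]⟩, ?_, ?_⟩
      · rw [mem_rules_iff]
        exact Or.inr (Or.inr (Or.inl ⟨d, hw d (by simp), rfl⟩))
      · exact ContextFreeRule.Rewrites.input_output
    refine hstep.trans_derives ?_
    have h2 := (ih (fun x hx => hw x (List.mem_cons_of_mem _ hx))).append_left
      [Symbol.terminal d]
    simpa using h2

lemma derives_liftStr {α β : List (Symbol T g.NT)} (h : g.Derives α β) :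
    (lifted g f ψ).Derives (liftStr g ψ α) (liftStr g ψ β) := by
  induction h with
  | refl => rfl
  | tail _ step ih =>
    refine ih.trans_produces ?_
    obtain ⟨r, hr, hrw⟩ := step
    obtain ⟨p, q, rfl, rfl⟩ := hrw.exists_parts
    refine ⟨⟨some (some r.input), liftStr g ψ r.output⟩, ?_, ?_⟩
    · rw [mem_rules_iff]
      exact Or.inr (Or.inr (Or.inr ⟨r, hr, rfl⟩))
    · rw [liftStr_append, liftStr_append, liftStr_append, liftStr_append]
      have h1 : liftStr g ψ [Symbol.nonterminal r.input]
          = [Symbol.nonterminal (some (some r.input))] := rfl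
      rw [h1]
      exact ContextFreeRule.rewrites_of_exists_parts _ _ _

lemma derives_word (hψ : ∀ t, f (ψ t) = some t) (hinj : ∀ t' t, f t' = some t → t' = ψ t) :
    ∀ (u : List T) (w : List T'), w.filterMap f = u →
    (lifted g f ψ).Derives
      (liftStr g ψ (u.map .terminal) ++ [.nonterminal (some none)])
      (w.map .terminal) := by
  intro u
  induction u with
  | nil =>
    intro w hw
    have hall : ∀ d ∈ w, f d = none := by
      intro d hd
      exact List.filterMap_eq_nil_iff.mp hw d hd
    simpa [liftStr] using pad_derives g f ψ w hall
  | cons t u ih =>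
    intro w hw
    obtain ⟨w₁, w₂, rfl, hw₁, hw₂⟩ := filterMap_eq_cons_split f ψ hinj w t u hw
    have h1 := (pad_derives g f ψ w₁ hw₁).append_right
      (Symbol.terminal (ψ t) :: (liftStr g ψ (u.map .terminal) ++ [.nonterminal (some none)]))
    have h2 := (ih w₂ hw₂).append_left
      (w₁.map Symbol.terminal ++ [Symbol.terminal (ψ t)])
    have heq : liftStr g ψ ((t :: u).map Symbol.terminal) ++
          ([.nonterminal (some none)] : List (Symbol T' (Option (Option g.NT))))
        = [Symbol.nonterminal (some none)] ++
          (Symbol.terminal (ψ t) ::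
            (liftStr g ψ (u.map .terminal) ++ [.nonterminal (some none)])) := by
      simp [liftStr, liftSym]
    rw [heq]
    refine h1.trans ?_
    have heq2 : ((w₁ ++ ψ t :: w₂).map Symbol.terminal :
        List (Symbol T' (Option (Option g.NT))))
        = (w₁.map Symbol.terminal ++ [Symbol.terminal (ψ t)]) ++ w₂.map Symbol.terminal := by
      simp
    rw [heq2]
    simpa using h2

lemma projStr_liftStr (hψ : ∀ t, f (ψ t) = some t) (α : List (Symbol T g.NT)) :
    projStr g f (liftStr g ψ α) = α := by
  induction α with
  | nil => rfl
  | cons s α ih =>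
    have h0 : liftStr g ψ (s :: α) = liftSym g ψ s ++ liftStr g ψ α := rfl
    rw [h0, projStr_append, ih]
    cases s with
    | terminal t => simp [liftSym, projStr, projSym, hψ t]
    | nonterminal n => simp [liftSym, projStr, projSym]

lemma projStr_map_terminal (w : List T') :
    projStr g f (w.map .terminal) = (w.filterMap f).map .terminal := by
  induction w with
  | nil => rfl
  | cons x w ih =>
    rcases hx : f x with _ | t <;>
      simp only [List.map_cons, projStr, List.flatMap_cons, projSym, hx, List.filterMap_cons] <;>
      simpa [projStr] using ih

lemma derives_projStr (hψ : ∀ t, f (ψ t) = some t)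
    {β γ : List (Symbol T' (Option (Option g.NT)))}
    (h : (lifted g f ψ).Derives β γ) :
    g.Derives (projStr g f β) (projStr g f γ) := by
  induction h with
  | refl => rfl
  | tail _ step ih =>
    refine ih.trans ?_
    obtain ⟨r, hr, hrw⟩ := step
    obtain ⟨p, q, rfl, rfl⟩ := hrw.exists_parts
    rw [mem_rules_iff] at hr
    rcases hr with rfl | rfl | ⟨d, hd, heq⟩ | ⟨r₀, hr₀, heq⟩
    · rw [projStr_append, projStr_append, projStr_append, projStr_append]
      rfl
    · rw [projStr_append, projStr_append, projStr_append, projStr_append]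
      rfl
    · rw [← heq, projStr_append, projStr_append, projStr_append, projStr_append]
      simp [projStr, projSym, hd]
      rfl
    · rw [← heq, projStr_append, projStr_append, projStr_append, projStr_append,
        projStr_liftStr g f ψ hψ]
      have h1 : projStr g f [Symbol.nonterminal (some (some r₀.input))]
          = [Symbol.nonterminal r₀.input] := rfl
      rw [h1]
      exact Produces.single ⟨r₀, hr₀, ContextFreeRule.rewrites_of_exists_parts _ _ _⟩

end Lift

theorem isCF_preimage [Finite T'] (f : T' → Option T) (ψ : T → T')
    (hψ : ∀ t, f (ψ t) = some t) (hinj : ∀ t' t, f t' = some t → t' = ψ t)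
    {L : Language T} (hL : L.IsContextFree) :
    Language.IsContextFree {w : List T' | w.filterMap f ∈ L} := by
  haveI := Fintype.ofFinite T'
  obtain ⟨g, rfl⟩ := hL
  refine ⟨lifted g f ψ, ?_⟩
  ext w
  constructor
  · intro hw
    have h := derives_projStr g f ψ hψ hw
    rw [projStr_map_terminal] at h
    exact h
  · intro hw
    have hstep : (lifted g f ψ).Produces [.nonterminal none]
        [.nonterminal (some (some g.initial)), .nonterminal (some none)] := by
      refine ⟨⟨none, [.nonterminal (some (some g.initial)), .nonterminal (some none)]⟩, ?_, ?_⟩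
      · rw [mem_rules_iff]; tauto
      · exact ContextFreeRule.Rewrites.input_output
    refine hstep.trans_derives ?_
    have h1 := (derives_liftStr g f ψ hw).append_right
      ([Symbol.nonterminal (some none)] : List (Symbol T' (Option (Option g.NT))))
    have h2 := derives_word g f ψ hψ hinj (w.filterMap f) w rfl
    exact (by simpa [liftStr, liftSym] using h1 : (lifted g f ψ).Derives
      [.nonterminal (some (some g.initial)), .nonterminal (some none)]
      (liftStr g ψ ((w.filterMap f).map .terminal) ++ [.nonterminal (some none)])).trans h2



def θhom {A B : Type} (q : A → Option B) : FreeGroup A →* FreeGroup B :=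
  FreeGroup.lift (fun a => (q a).elim 1 FreeGroup.of)

def fword {A B : Type} (q : A → Option B) : A ⊕ A → Option (B ⊕ B) :=
  Sum.elim (fun a => (q a).map Sum.inl) (fun a => (q a).map Sum.inr)

lemma evalWord_cons {A : Type} (x : A ⊕ A) (w : List (A ⊕ A)) :
    evalWord (x :: w)
      = Sum.elim (fun a => FreeGroup.of a) (fun a => (FreeGroup.of a)⁻¹) x * evalWord w := by
  simp [evalWord]

lemma θhom_evalWord {A B : Type} (q : A → Option B) (w : List (A ⊕ A)) :
    θhom q (evalWord w) = evalWord (w.filterMap (fword q)) := by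
  induction w with
  | nil => simp [evalWord]
  | cons x w ih =>
    rw [evalWord_cons, map_mul, ih]
    rcases x with a | a <;> rcases hq : q a with _ | b <;>
      simp [θhom, fword, List.filterMap_cons, hq, evalWord_cons]

lemma comp_loopLang {A B V : Type} (q : A → Option B) [MulAction (FreeGroup B) V] (v : V) :
    (letI := MulAction.compHom V (θhom q); loopLang A V v)
      = {w : List (A ⊕ A) | w.filterMap (fword q) ∈ loopLang B V v} := by
  letI := MulAction.compHom V (θhom q)
  ext w
  show evalWord w • v = v ↔ _
  rw [MulAction.compHom_smul_def, θhom_evalWord]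
  rfl

lemma comp_pretransitive {A B V : Type} (θ : FreeGroup A →* FreeGroup B)
    (σ : FreeGroup B →* FreeGroup A) (hσ : ∀ x, θ (σ x) = x)
    [MulAction (FreeGroup B) V] [MulAction.IsPretransitive (FreeGroup B) V] :
    letI := MulAction.compHom V θ
    MulAction.IsPretransitive (FreeGroup A) V := by
  letI := MulAction.compHom V θ
  constructor
  intro v w
  obtain ⟨x, hx⟩ := MulAction.exists_smul_eq (FreeGroup B) v w
  exact ⟨σ x, by rw [MulAction.compHom_smul_def, hσ]; exact hx⟩

lemma θhom_q₁_inl {A B : Type} (x : FreeGroup A) :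
    θhom (Sum.elim some (fun _ : B => none)) (FreeGroup.map Sum.inl x) = x := by
  have h : (θhom (Sum.elim some (fun _ : B => none))).comp
      (FreeGroup.map (Sum.inl : A → A ⊕ B)) = MonoidHom.id _ :=
    FreeGroup.ext_hom _ _ (by intro a; simp [θhom, FreeGroup.map.of, FreeGroup.lift_apply_of])
  exact DFunLike.congr_fun h x

lemma θhom_q₁_inr {A B : Type} (y : FreeGroup B) :
    θhom (Sum.elim some (fun _ : B => none)) (FreeGroup.map (Sum.inr : B → A ⊕ B) y) = 1 := by
  have h : (θhom (Sum.elim some (fun _ : B => none))).comp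
      (FreeGroup.map (Sum.inr : B → A ⊕ B)) = 1 :=
    FreeGroup.ext_hom _ _ (by intro a; simp [θhom, FreeGroup.map.of, FreeGroup.lift_apply_of])
  exact DFunLike.congr_fun h y

lemma θhom_q₂_inl {A B : Type} (x : FreeGroup A) :
    θhom (Sum.elim (fun _ : A => none) some) (FreeGroup.map (Sum.inl : A → A ⊕ B) x) = 1 := by
  have h : (θhom (Sum.elim (fun _ : A => none) some)).comp
      (FreeGroup.map (Sum.inl : A → A ⊕ B)) = 1 :=
    FreeGroup.ext_hom _ _ (by intro a; simp [θhom, FreeGroup.map.of, FreeGroup.lift_apply_of])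
  exact DFunLike.congr_fun h x

lemma θhom_q₂_inr {A B : Type} (y : FreeGroup B) :
    θhom (Sum.elim (fun _ : A => none) some) (FreeGroup.map (Sum.inr : B → A ⊕ B) y) = y := by
  have h : (θhom (Sum.elim (fun _ : A => none) some)).comp
      (FreeGroup.map (Sum.inr : B → A ⊕ B)) = MonoidHom.id _ :=
    FreeGroup.ext_hom _ _ (by intro a; simp [θhom, FreeGroup.map.of, FreeGroup.lift_apply_of])
  exact DFunLike.congr_fun h y

end CFTRAux

open CFTRAux

/-- The class CF-TR is closed under taking direct products. -/
theorem stmt6 {G₁ G₂ : Type} [Group G₁] [Group G₂] (h₁ : IsCFTR G₁) (h₂ : IsCFTR G₂) :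
    IsCFTR (G₁ × G₂) := by
  obtain ⟨A₁, hA₁, k₁, V₁, inst₁, hne₁, htr₁, hcf₁, ⟨e₁⟩⟩ := h₁
  obtain ⟨A₂, hA₂, k₂, V₂, inst₂, hne₂, htr₂, hcf₂, ⟨e₂⟩⟩ := h₂
  haveI := hA₁; haveI := hA₂
  set A : Type := A₁ ⊕ A₂ with hA
  set q₁ : A → Option A₁ := Sum.elim some (fun _ => none) with hq₁
  set q₂ : A → Option A₂ := Sum.elim (fun _ => none) some with hq₂
  set W : Fin k₁ ⊕ Fin k₂ → Type := Sum.elim V₁ V₂ with hW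
  letI instW : ∀ j, MulAction (FreeGroup A) (W j) := fun j =>
    match j with
    | .inl i => letI := inst₁ i; MulAction.compHom (V₁ i) (θhom q₁)
    | .inr i => letI := inst₂ i; MulAction.compHom (V₂ i) (θhom q₂)
  set e : Fin k₁ ⊕ Fin k₂ ≃ Fin (k₁ + k₂) := finSumFinEquiv with he
  refine ⟨A, inferInstance, k₁ + k₂, fun i => W (e.symm i), fun i => instW (e.symm i),
    ?_, ?_, ?_, ?_⟩
  · -- nonempty
    have key : ∀ j : Fin k₁ ⊕ Fin k₂, Nonempty (W j) := by
      rintro (j | j)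
      · exact hne₁ j
      · exact hne₂ j
    exact fun i => key (e.symm i)
  · -- pretransitive
    have key : ∀ j : Fin k₁ ⊕ Fin k₂, MulAction.IsPretransitive (FreeGroup A) (W j) := by
      rintro (j | j)
      · letI := inst₁ j
        haveI := htr₁ j
        have h : letI := MulAction.compHom (V₁ j) (θhom q₁);
            MulAction.IsPretransitive (FreeGroup A) (V₁ j) :=
          comp_pretransitive (θhom q₁) (FreeGroup.map Sum.inl) θhom_q₁_inl
        exact h
      · letI := inst₂ j
        haveI := htr₂ j
        have h : letI := MulAction.compHom (V₂ j) (θhom q₂);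
            MulAction.IsPretransitive (FreeGroup A) (V₂ j) :=
          comp_pretransitive (θhom q₂) (FreeGroup.map Sum.inr) θhom_q₂_inr
        exact h
    exact fun i => key (e.symm i)
  · -- context-free
    have key : ∀ j : Fin k₁ ⊕ Fin k₂,
        ∃ v₀ : W j, (loopLang A (W j) v₀).IsContextFree := by
      rintro (j | j)
      · letI := inst₁ j
        obtain ⟨v₀, hv₀⟩ := hcf₁ j
        refine ⟨v₀, ?_⟩
        have hL : loopLang A (W (Sum.inl j)) v₀
            = {w : List (A ⊕ A) | w.filterMap (fword q₁) ∈ loopLang A₁ (V₁ j) v₀} :=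
          comp_loopLang q₁ v₀
        rw [hL]
        refine isCF_preimage (fword q₁) (Sum.map Sum.inl Sum.inl) ?_ ?_ hv₀
        · rintro (a | a) <;> simp [fword, hq₁]
        · rintro ((a | a) | (a | a)) (b | b) h <;>
            simp [fword, hq₁, Option.map_eq_some_iff] at h <;> simp [h]
      · letI := inst₂ j
        obtain ⟨v₀, hv₀⟩ := hcf₂ j
        refine ⟨v₀, ?_⟩
        have hL : loopLang A (W (Sum.inr j)) v₀
            = {w : List (A ⊕ A) | w.filterMap (fword q₂) ∈ loopLang A₂ (V₂ j) v₀} :=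
          comp_loopLang q₂ v₀
        rw [hL]
        refine isCF_preimage (fword q₂) (Sum.map Sum.inr Sum.inr) ?_ ?_ hv₀
        · rintro (a | a) <;> simp [fword, hq₂]
        · rintro ((a | a) | (a | a)) (b | b) h <;>
            simp [fword, hq₂, Option.map_eq_some_iff] at h <;> simp [h]
    exact fun i => key (e.symm i)
  · -- the isomorphism
    set N₁ : Subgroup (FreeGroup A₁) := ⨅ i, actionKernel A₁ (V₁ i) with hN₁
    set N₂ : Subgroup (FreeGroup A₂) := ⨅ i, actionKernel A₂ (V₂ i) with hN₂
    set φ : FreeGroup A →* (FreeGroup A₁ ⧸ N₁) × (FreeGroup A₂ ⧸ N₂) :=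
      ((QuotientGroup.mk' N₁).comp (θhom q₁)).prod
        ((QuotientGroup.mk' N₂).comp (θhom q₂)) with hφ
    have hkermem : ∀ g : FreeGroup A,
        g ∈ φ.ker ↔ ∀ i : Fin (k₁ + k₂), g ∈ actionKernel A (W (e.symm i)) := by
      intro g
      have h1 : g ∈ φ.ker ↔ θhom q₁ g ∈ N₁ ∧ θhom q₂ g ∈ N₂ := by
        rw [MonoidHom.mem_ker, hφ, MonoidHom.prod_apply, Prod.mk_eq_one]
        rw [MonoidHom.comp_apply, MonoidHom.comp_apply, QuotientGroup.mk'_apply,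
          QuotientGroup.mk'_apply, QuotientGroup.eq_one_iff, QuotientGroup.eq_one_iff]
      have hsplit : (∀ i : Fin (k₁ + k₂), g ∈ actionKernel A (W (e.symm i)))
          ↔ ∀ j : Fin k₁ ⊕ Fin k₂, g ∈ actionKernel A (W j) := by
        constructor
        · intro h j
          have h2 := h (e j)
          rw [Equiv.symm_apply_apply] at h2
          exact h2
        · intro h i
          exact h _
      have hK₁ : ∀ j : Fin k₁, (g ∈ actionKernel A (W (Sum.inl j))
          ↔ θhom q₁ g ∈ (letI := inst₁ j; actionKernel A₁ (V₁ j))) := by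
        intro j
        letI := inst₁ j
        constructor <;> intro h v <;> exact h v
      have hK₂ : ∀ j : Fin k₂, (g ∈ actionKernel A (W (Sum.inr j))
          ↔ θhom q₂ g ∈ (letI := inst₂ j; actionKernel A₂ (V₂ j))) := by
        intro j
        letI := inst₂ j
        constructor <;> intro h v <;> exact h v
      rw [h1, hsplit, Sum.forall]
      rw [hN₁, hN₂, Subgroup.mem_iInf, Subgroup.mem_iInf]
      constructor
      · rintro ⟨ha, hb⟩
        exact ⟨fun j => (hK₁ j).mpr (ha j), fun j => (hK₂ j).mpr (hb j)⟩
      · rintro ⟨ha, hb⟩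
        exact ⟨fun j => (hK₁ j).mp (ha j), fun j => (hK₂ j).mp (hb j)⟩
    have hker : φ.ker = ⨅ i : Fin (k₁ + k₂), actionKernel A (W (e.symm i)) := by
      ext g
      rw [hkermem g, Subgroup.mem_iInf]
    have hsurj : Function.Surjective φ := by
      rintro ⟨x, y⟩
      obtain ⟨x, rfl⟩ := QuotientGroup.mk'_surjective N₁ x
      obtain ⟨y, rfl⟩ := QuotientGroup.mk'_surjective N₂ y
      refine ⟨FreeGroup.map Sum.inl x * FreeGroup.map Sum.inr y, ?_⟩
      rw [hφ, MonoidHom.prod_apply]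
      refine Prod.ext ?_ ?_
      · show (QuotientGroup.mk' N₁) (θhom q₁ (FreeGroup.map Sum.inl x * FreeGroup.map Sum.inr y))
          = (QuotientGroup.mk' N₁) x
        rw [map_mul, θhom_q₁_inl, θhom_q₁_inr, mul_one]
      · show (QuotientGroup.mk' N₂) (θhom q₂ (FreeGroup.map Sum.inl x * FreeGroup.map Sum.inr y))
          = (QuotientGroup.mk' N₂) y
        rw [map_mul, θhom_q₂_inl, θhom_q₂_inr, one_mul]
    exact ⟨(e₁.prodCongr e₂).trans
      ((QuotientGroup.quotientKerEquivOfSurjective φ hsurj).symm.trans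
        (QuotientGroup.quotientMulEquivOfEq hker))⟩
end

section
/- Let G be a group, A a finite type, and π : FreeGroup A →* G a surjective group homomorphism. Let V₁, …, Vₖ be nonempty types with pretransitive left actions of FreeGroup A and basepoints xᵢ : Vᵢ. If the word problem of G equals the intersection of the loop languages, i.e. {w : List (A ⊕ A) | π (eval w) = 1} = ⋂ i, L(Vᵢ, xᵢ), then in fact {w | π (eval w) = 1} = ⋂ i, {w | ∀ v : Vᵢ, eval w • v = v}; equivalently the kernel of π equals ⨅ i, K(Vᵢ), so that G is isomorphic to the transition group FreeGroup A ⧸ (⨅ i, K(Vᵢ)). In particular, if moreover each L(Vᵢ, xᵢ) is a context-free language, then G is in CF-TR. -/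
lemma evalWord_append {A : Type} (w₁ w₂ : List (A ⊕ A)) :
    evalWord (w₁ ++ w₂) = evalWord w₁ * evalWord w₂ := by
  simp [evalWord]

lemma evalWord_surjective {A : Type} : Function.Surjective (evalWord (A := A)) := by
  intro g
  induction g using FreeGroup.induction_on with
  | C1 => exact ⟨[], rfl⟩
  | of a => exact ⟨[Sum.inl a], by simp [evalWord]⟩
  | inv_of a _ => exact ⟨[Sum.inr a], by simp [evalWord]⟩
  | mul g h hg hh =>
    obtain ⟨w₁, rfl⟩ := hg
    obtain ⟨w₂, rfl⟩ := hh
    exact ⟨w₁ ++ w₂, evalWord_append w₁ w₂⟩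


/-- If the word problem of a group `G` (with respect to a surjection `π` from a free group)
equals the intersection of the loop languages of a finite family of connected complete
inverse graphs at chosen basepoints, then it equals the intersection of the everywhere-circuit
languages; equivalently `ker π = ⨅ i, K(Vᵢ)`, so `G` is the transition group of the family.
In particular, if each loop language is context-free then `G` is in CF-TR. -/
theorem stmt8 {A : Type} [Finite A] {G : Type} [Group G]
    (π : FreeGroup A →* G) (hπ : Function.Surjective π)
    {k : ℕ} (V : Fin k → Type) [∀ i, MulAction (FreeGroup A) (V i)]
    [∀ i, Nonempty (V i)]
    [∀ i, MulAction.IsPretransitive (FreeGroup A) (V i)]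
    (x : ∀ i, V i)
    (hwp : {w : List (A ⊕ A) | π (evalWord w) = 1} =
      ⋂ i, {w : List (A ⊕ A) | evalWord w • x i = x i}) :
    ({w : List (A ⊕ A) | π (evalWord w) = 1} =
        ⋂ i, {w : List (A ⊕ A) | ∀ v : V i, evalWord w • v = v}) ∧
    π.ker = (⨅ i, actionKernel A (V i)) ∧
    Nonempty (G ≃* (FreeGroup A ⧸ ⨅ i, actionKernel A (V i))) ∧
    ((∀ i, (loopLang A (V i) (x i)).IsContextFree) → IsCFTR G) := by
  -- key equivalence at the level of group elements
  have key : ∀ g : FreeGroup A, π g = 1 ↔ ∀ i, g • x i = x i := by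
    intro g
    obtain ⟨w, rfl⟩ := evalWord_surjective g
    constructor
    · intro h i
      exact Set.mem_iInter.mp ((Set.ext_iff.mp hwp w).mp h) i
    · intro h
      exact (Set.ext_iff.mp hwp w).mpr (Set.mem_iInter.mpr h)
  have key2 : ∀ g : FreeGroup A, π g = 1 ↔ ∀ i, ∀ v : V i, g • v = v := by
    intro g
    constructor
    · intro hg i v
      obtain ⟨h, rfl⟩ := MulAction.exists_smul_eq (FreeGroup A) (x i) v
      have : π (h⁻¹ * g * h) = 1 := by simp [hg]
      have := ((key _).mp this) i
      conv_rhs => rw [← this]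
      rw [smul_smul, smul_smul]
      congr 1
      group
    · intro h
      exact (key g).mpr fun i => h i (x i)
  have hker : π.ker = (⨅ i, actionKernel A (V i)) := by
    ext g
    rw [MonoidHom.mem_ker, Subgroup.mem_iInf, key2]
    constructor
    · intro h i
      exact h i
    · intro h i
      exact h i
  have hiso : Nonempty (G ≃* (FreeGroup A ⧸ ⨅ i, actionKernel A (V i))) :=
    ⟨(QuotientGroup.quotientKerEquivOfSurjective π hπ).symm.trans
      (QuotientGroup.quotientMulEquivOfEq hker)⟩
  refine ⟨?_, hker, hiso, ?_⟩
  · ext w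
    simp only [Set.mem_setOf_eq, Set.mem_iInter]
    exact key2 (evalWord w)
  · intro hcf
    refine ⟨A, ‹Finite A›, k, V, ‹∀ i, MulAction (FreeGroup A) (V i)›, ?_, ?_, ?_, ?_⟩
    · exact ‹∀ i, Nonempty (V i)›
    · exact ‹∀ i, MulAction.IsPretransitive (FreeGroup A) (V i)›
    · exact fun i => ⟨x i, hcf i⟩
    · exact hiso
end

section
/- The subgroup of Equiv.Perm (ℤ × ZMod 2) generated by the two permutations α and β is isomorphic to ℤ × ℤ, where α (x, y) = (x + 1, y) if y = 0 and α (x, y) = (x, y) if y = 1, and β (x, y) = (x + 1, y) if y = 1 and β (x, y) = (x, y) if y = 0. -/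
/-- The permutation `a` of the graph `Ω`: shift the bottom line, fix the top line. -/
def alpha : Equiv.Perm (ℤ × ZMod 2) where
  toFun p := if p.2 = 0 then (p.1 + 1, p.2) else p
  invFun p := if p.2 = 0 then (p.1 - 1, p.2) else p
  left_inv p := by by_cases h : p.2 = 0 <;> simp [h, Prod.ext_iff]
  right_inv p := by by_cases h : p.2 = 0 <;> simp [h, Prod.ext_iff]

/-- The permutation `b` of the graph `Ω`: shift the top line, fix the bottom line. -/
def beta : Equiv.Perm (ℤ × ZMod 2) where
  toFun p := if p.2 = 1 then (p.1 + 1, p.2) else p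
  invFun p := if p.2 = 1 then (p.1 - 1, p.2) else p
  left_inv p := by by_cases h : p.2 = 1 <;> simp [h, Prod.ext_iff]
  right_inv p := by by_cases h : p.2 = 1 <;> simp [h, Prod.ext_iff]

/-- Combined shift permutation: shift bottom line by `m`, top line by `n`. -/
def gammaPerm (m n : ℤ) : Equiv.Perm (ℤ × ZMod 2) where
  toFun p := (p.1 + if p.2 = 0 then m else n, p.2)
  invFun p := (p.1 - if p.2 = 0 then m else n, p.2)
  left_inv p := by by_cases h : p.2 = 0 <;> simp [h, Prod.ext_iff]
  right_inv p := by by_cases h : p.2 = 0 <;> simp [h, Prod.ext_iff]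

/-- The homomorphism from `ℤ × ℤ` onto the group generated by `alpha` and `beta`. -/
def gammaHom : Multiplicative ℤ × Multiplicative ℤ →* Equiv.Perm (ℤ × ZMod 2) where
  toFun q := gammaPerm q.1.toAdd q.2.toAdd
  map_one' := by
    ext p <;> simp [gammaPerm]
  map_mul' a b := by
    ext p <;>
      by_cases h : p.2 = 0 <;>
        simp [gammaPerm, h, Equiv.Perm.mul_apply] <;> ring

lemma gammaHom_alpha : gammaHom (Multiplicative.ofAdd 1, 1) = alpha := by
  ext p <;> by_cases h : p.2 = 0 <;> simp [gammaHom, gammaPerm, alpha, h]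

lemma top_ne_zero : (1 : ZMod 2) ≠ 0 := by decide

lemma zmod2_cases (y : ZMod 2) : y = 0 ∨ y = 1 := by revert y; decide

lemma gammaHom_beta : gammaHom (1, Multiplicative.ofAdd 1) = beta := by
  ext p <;> rcases zmod2_cases p.2 with h | h <;>
    simp [gammaHom, gammaPerm, beta, h, top_ne_zero]

lemma gammaHom_inj : Function.Injective gammaHom := by
  intro q r hqr
  have h0 := congrArg (fun e : Equiv.Perm (ℤ × ZMod 2) => e (0, 0)) hqr
  have h1 := congrArg (fun e : Equiv.Perm (ℤ × ZMod 2) => e (0, 1)) hqr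
  simp [gammaHom, gammaPerm, top_ne_zero, Prod.ext_iff] at h0 h1
  exact Prod.ext h0 h1

lemma gammaHom_range :
    gammaHom.range = Subgroup.closure {alpha, beta} := by
  apply le_antisymm
  · rintro x ⟨q, rfl⟩
    have hq : q = (Multiplicative.ofAdd 1, 1) ^ q.1.toAdd *
        (1, Multiplicative.ofAdd 1) ^ q.2.toAdd := by
      apply Prod.ext <;>
        · apply Multiplicative.toAdd.injective
          simp [toAdd_zpow]
    rw [hq, map_mul, map_zpow, map_zpow, gammaHom_alpha, gammaHom_beta]
    have ha : alpha ∈ Subgroup.closure {alpha, beta} :=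
      Subgroup.subset_closure (by simp)
    have hb : beta ∈ Subgroup.closure {alpha, beta} :=
      Subgroup.subset_closure (by simp)
    exact mul_mem (zpow_mem ha _) (zpow_mem hb _)
  · rw [Subgroup.closure_le]
    rintro x (rfl | rfl)
    · exact ⟨(Multiplicative.ofAdd 1, 1), gammaHom_alpha⟩
    · exact ⟨(1, Multiplicative.ofAdd 1), gammaHom_beta⟩

/-- The subgroup of permutations of `ℤ × ZMod 2` generated by `alpha` and `beta`
is isomorphic to `ℤ × ℤ`. -/
theorem stmt13 :
    Nonempty
      ((Subgroup.closure {alpha, beta} : Subgroup (Equiv.Perm (ℤ × ZMod 2))) ≃*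
        (Multiplicative ℤ × Multiplicative ℤ)) := by
  exact ⟨(MulEquiv.subgroupCongr gammaHom_range.symm).trans
    (MonoidHom.ofInjective gammaHom_inj).symm⟩
end

section
/- Let α, β, γ be the permutations of ℤ × ZMod 2 given by α (x, y) = (x + 1, y) if y = 0 and (x, y) otherwise; β (x, y) = (x + 1, y) if y = 1 and (x, y) otherwise; γ (x, y) = (x, y + 1). Then the subgroup of Equiv.Perm (ℤ × ZMod 2) generated by {α, β, γ} is isomorphic to the presented group ⟨a, b, c ∣ c² = 1, a·b = b·a, c·a = b·c⟩, i.e. the PresentedGroup on three generators with relator set {c·c, a·b·a⁻¹·b⁻¹, c·a·c⁻¹·b⁻¹} in FreeGroup (Fin 3); in particular this group is a semidirect product (ℤ × ℤ) ⋊ (ZMod 2), where the nontrivial element of ZMod 2 acts on ℤ × ℤ by swapping the two coordinates. -/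
/-- The permutation `c` of the graph `Ω`: swap the two lines. -/
def gamma : Equiv.Perm (ℤ × ZMod 2) where
  toFun p := (p.1, p.2 + 1)
  invFun p := (p.1, p.2 - 1)
  left_inv p := by simp
  right_inv p := by simp

/-- The relators `c² = 1`, `ab = ba`, `ca = bc` on the generators `a, b, c`. -/
def omegaRels : Set (FreeGroup (Fin 3)) :=
  { FreeGroup.of 2 * FreeGroup.of 2,
    FreeGroup.of 0 * FreeGroup.of 1 * (FreeGroup.of 0)⁻¹ * (FreeGroup.of 1)⁻¹,
    FreeGroup.of 2 * FreeGroup.of 0 * (FreeGroup.of 2)⁻¹ * (FreeGroup.of 1)⁻¹ }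

namespace Stmt14

open Multiplicative SemidirectProduct

lemma zmod2_cases : ∀ x : ZMod 2, x = 0 ∨ x = 1 := by decide

/-- The swap automorphism of `Multiplicative (ℤ × ℤ)`. -/
def sw : MulAut (Multiplicative (ℤ × ℤ)) :=
  AddEquiv.toMultiplicative (AddEquiv.prodComm : ℤ × ℤ ≃+ ℤ × ℤ)

lemma sw_toAdd (x : Multiplicative (ℤ × ℤ)) :
    (sw x).toAdd = (x.toAdd.2, x.toAdd.1) := rfl

lemma sw_sq : sw * sw = 1 := by
  ext x <;> rfl

/-- The action of `ZMod 2` on `ℤ × ℤ` by swapping coordinates. -/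
def φ0 : Multiplicative (ZMod 2) →* MulAut (Multiplicative (ℤ × ℤ)) :=
  MonoidHom.mk' (fun ε => sw ^ (ε.toAdd).val) (by
    intro x y
    rcases zmod2_cases x.toAdd with hx | hx <;> rcases zmod2_cases y.toAdd with hy | hy <;>
      simp only [toAdd_mul, hx, hy] <;>
      simp only [show ((0:ZMod 2)+0) = 0 from rfl, show ((0:ZMod 2)+1) = 1 from rfl,
        show ((1:ZMod 2)+0) = 1 from rfl, show ((1:ZMod 2)+1) = 0 from rfl,
        show (0:ZMod 2).val = 0 from rfl, show (1:ZMod 2).val = 1 from rfl,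
        pow_zero, pow_one, one_mul, mul_one, sw_sq])

lemma φ0_apply (ε : Multiplicative (ZMod 2)) : φ0 ε = sw ^ (ε.toAdd).val := rfl

lemma φ0_one : φ0 (ofAdd 1) = sw := by
  rw [φ0_apply, show ((ofAdd (1 : ZMod 2)).toAdd).val = 1 from rfl, pow_one]

lemma φ0_zero : φ0 (ofAdd 0) = 1 := by
  rw [φ0_apply, show ((ofAdd (0 : ZMod 2)).toAdd).val = 0 from rfl, pow_zero]

abbrev GG := Multiplicative (ℤ × ℤ) ⋊[φ0] Multiplicative (ZMod 2)

/-- The shift amount. -/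
def cf (g : GG) (y : ZMod 2) : ℤ :=
  if y + g.right.toAdd = 0 then g.left.toAdd.1 else g.left.toAdd.2

def toPerm (g : GG) : Equiv.Perm (ℤ × ZMod 2) where
  toFun p := (p.1 + cf g p.2, p.2 + g.right.toAdd)
  invFun p := (p.1 - cf g (p.2 - g.right.toAdd), p.2 - g.right.toAdd)
  left_inv p := by simp
  right_inv p := by simp

lemma toPerm_mul (g h : GG) : toPerm (g * h) = toPerm g * toPerm h := by
  apply Equiv.ext
  rintro ⟨x, y⟩
  have key : y + (toAdd (g.right) + toAdd (h.right))
      = (y + toAdd (h.right)) + toAdd (g.right) := by ring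
  simp only [toPerm, cf, Equiv.Perm.mul_apply, Equiv.coe_fn_mk, SemidirectProduct.mul_left,
    SemidirectProduct.mul_right, toAdd_mul, φ0_apply, Prod.mk.injEq, key]
  refine ⟨?_, trivial⟩
  rcases zmod2_cases (toAdd g.right) with he | he <;>
    rcases zmod2_cases (y + toAdd h.right) with hf | hf <;>
      rw [he, hf] <;>
      simp only [show ((0:ZMod 2)+0) = 0 from rfl, show ((0:ZMod 2)+1) = 1 from rfl,
        show ((1:ZMod 2)+0) = 1 from rfl, show ((1:ZMod 2)+1) = 0 from rfl,
        show (0:ZMod 2).val = 0 from rfl, show (1:ZMod 2).val = 1 from rfl,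
        pow_zero, pow_one, MulAut.one_apply, sw_toAdd, toAdd_mul, Prod.fst_add,
        Prod.snd_add, if_pos rfl, one_ne_zero, if_false, if_true] <;>
      ring

def π : GG →* Equiv.Perm (ℤ × ZMod 2) := MonoidHom.mk' toPerm toPerm_mul

def A : GG := inl (ofAdd (1, 0))
def B : GG := inl (ofAdd (0, 1))
def C : GG := inr (ofAdd 1)

lemma πA : toPerm A = alpha := by
  apply Equiv.ext
  rintro ⟨x, y⟩
  rcases zmod2_cases y with h | h <;>
    simp [toPerm, cf, A, alpha, h]

lemma πB : toPerm B = beta := by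
  apply Equiv.ext
  rintro ⟨x, y⟩
  rcases zmod2_cases y with h | h <;>
    simp [toPerm, cf, B, beta, h]

lemma πC : toPerm C = gamma := by
  apply Equiv.ext
  rintro ⟨x, y⟩
  rcases zmod2_cases (y + 1) with h | h <;>
    simp [toPerm, cf, C, gamma, h]

lemma left_decomp (l : Multiplicative (ℤ × ℤ)) :
    l = ofAdd (1, 0) ^ l.toAdd.1 * ofAdd (0, 1) ^ l.toAdd.2 := by
  apply Multiplicative.toAdd.injective
  simp [toAdd_zpow, Prod.ext_iff]

lemma inl_decomp (l : Multiplicative (ℤ × ℤ)) :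
    inl (φ := φ0) l = A ^ l.toAdd.1 * B ^ l.toAdd.2 := by
  conv_lhs => rw [left_decomp l]
  rw [map_mul, map_zpow, map_zpow]
  rfl

lemma mem_closure (g : GG) :
    π g ∈ Subgroup.closure {alpha, beta, gamma} := by
  set S := Subgroup.closure {alpha, beta, gamma} with hS
  have hA : alpha ∈ S := Subgroup.subset_closure (by simp)
  have hB : beta ∈ S := Subgroup.subset_closure (by simp)
  have hC : gamma ∈ S := Subgroup.subset_closure (by simp)
  have hg : g = inl g.left * inr g.right := (inl_left_mul_inr_right g).symm
  rw [hg, map_mul]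
  apply mul_mem
  · rw [inl_decomp, map_mul, map_zpow, map_zpow]
    have e1 : π A = alpha := πA
    have e2 : π B = beta := πB
    rw [e1, e2]
    exact mul_mem (zpow_mem hA _) (zpow_mem hB _)
  · rcases zmod2_cases (toAdd g.right) with h | h
    · have : g.right = 1 := by
        apply Multiplicative.toAdd.injective; simpa using h
      rw [this, map_one, map_one]
      exact one_mem S
    · have : g.right = ofAdd 1 := by
        apply Multiplicative.toAdd.injective; simpa using h
      rw [this]
      have e3 : π C = gamma := πC
      rw [show inr (φ := φ0) (ofAdd 1) = C from rfl, e3]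
      exact hC

lemma range_eq : π.range = Subgroup.closure {alpha, beta, gamma} := by
  apply le_antisymm
  · rintro _ ⟨g, rfl⟩
    exact mem_closure g
  · rw [Subgroup.closure_le]
    intro x hx
    simp only [Set.mem_insert_iff, Set.mem_singleton_iff] at hx
    rcases hx with rfl | rfl | rfl
    · exact ⟨A, πA⟩
    · exact ⟨B, πB⟩
    · exact ⟨C, πC⟩

lemma π_inj : Function.Injective π := by
  rw [injective_iff_map_eq_one]
  intro g hg
  have hg' : toPerm g = 1 := hg
  have h0 : toPerm g (0, 0) = (0, 0) := by rw [hg']; rfl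
  have h1 : toPerm g (0, 1) = (0, 1) := by rw [hg']; rfl
  simp only [toPerm, Equiv.coe_fn_mk, Prod.mk.injEq, cf, zero_add] at h0 h1
  have he : toAdd g.right = 0 := h0.2
  have hm : g.left.toAdd.1 = 0 := by
    have := h0.1; rwa [he, if_pos rfl] at this
  have hn : g.left.toAdd.2 = 0 := by
    have := h1.1; rw [he, add_zero] at this
    rwa [if_neg (by decide)] at this
  have h2 : g.left = 1 := by
    apply Multiplicative.toAdd.injective
    rw [Prod.ext_iff]; exact ⟨hm, hn⟩
  exact SemidirectProduct.ext h2 (Multiplicative.toAdd.injective he)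

/-- The transition group is isomorphic to the semidirect product. -/
noncomputable def iso1 :
    (Subgroup.closure {alpha, beta, gamma} : Subgroup (Equiv.Perm (ℤ × ZMod 2))) ≃* GG :=
  (MulEquiv.subgroupCongr range_eq.symm).trans (MonoidHom.ofInjective π_inj).symm

/- ## The presented group -/

abbrev P := PresentedGroup omegaRels

def pa : P := .of 0
def pb : P := .of 1
def pc : P := .of 2

lemma rel_mem {r : FreeGroup (Fin 3)} (hr : r ∈ omegaRels) :
    PresentedGroup.mk omegaRels r = 1 :=
  (QuotientGroup.eq_one_iff r).2 (Subgroup.subset_normalClosure hr)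

lemma hcc : pc * pc = 1 := by
  have := rel_mem (r := FreeGroup.of 2 * FreeGroup.of 2) (Set.mem_insert _ _)
  exact this

lemma hab : pa * pb = pb * pa := by
  have := rel_mem
    (r := FreeGroup.of 0 * FreeGroup.of 1 * (FreeGroup.of 0)⁻¹ * (FreeGroup.of 1)⁻¹)
    (Set.mem_insert_iff.2 (Or.inr (Set.mem_insert _ _)))
  simp only [map_mul, map_inv] at this
  rw [mul_inv_eq_one] at this
  exact mul_inv_eq_iff_eq_mul.1 this

lemma hca : pc * pa = pb * pc := by
  have := rel_mem
    (r := FreeGroup.of 2 * FreeGroup.of 0 * (FreeGroup.of 2)⁻¹ * (FreeGroup.of 1)⁻¹)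
    (Set.mem_insert_iff.2 (Or.inr (Set.mem_insert_iff.2 (Or.inr rfl))))
  simp only [map_mul, map_inv] at this
  rw [mul_inv_eq_one] at this
  exact mul_inv_eq_iff_eq_mul.1 this

lemma hcinv : pc⁻¹ = pc := inv_eq_of_mul_eq_one_right hcc

lemma hcac : pc * pa * pc⁻¹ = pb := mul_inv_eq_iff_eq_mul.2 hca

lemma hcbc : pc * pb * pc⁻¹ = pa := by
  calc pc * pb * pc⁻¹ = pc * (pc * pa * pc⁻¹) * pc⁻¹ := by rw [hcac]
    _ = (pc * pc) * pa * (pc⁻¹ * pc⁻¹) := by group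
    _ = pa := by rw [hcc, hcinv, hcc, one_mul, mul_one]

lemma commab : Commute pa pb := hab

def f₁ : Multiplicative (ℤ × ℤ) →* P :=
  MonoidHom.mk' (fun v => pa ^ v.toAdd.1 * pb ^ v.toAdd.2) (by
    intro u v
    simp only [toAdd_mul, Prod.fst_add, Prod.snd_add]
    rw [zpow_add, zpow_add]
    exact ((commab.zpow_zpow v.toAdd.1 u.toAdd.2).symm.mul_mul_mul_comm _ _).symm)

def f₂ : Multiplicative (ZMod 2) →* P :=
  MonoidHom.mk' (fun ε => pc ^ (ε.toAdd).val) (by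
    intro x y
    rcases zmod2_cases x.toAdd with hx | hx <;> rcases zmod2_cases y.toAdd with hy | hy <;>
      simp only [toAdd_mul, hx, hy] <;>
      simp only [show ((0:ZMod 2)+0) = 0 from rfl, show ((0:ZMod 2)+1) = 1 from rfl,
        show ((1:ZMod 2)+0) = 1 from rfl, show ((1:ZMod 2)+1) = 0 from rfl,
        show (0:ZMod 2).val = 0 from rfl, show (1:ZMod 2).val = 1 from rfl,
        pow_zero, pow_one, one_mul, mul_one, hcc])

lemma f₂_apply (ε : Multiplicative (ZMod 2)) : f₂ ε = pc ^ (ε.toAdd).val := rfl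

lemma f₁_apply (v : Multiplicative (ℤ × ℤ)) : f₁ v = pa ^ v.toAdd.1 * pb ^ v.toAdd.2 := rfl

lemma compat : ∀ ε : Multiplicative (ZMod 2),
    f₁.comp (MulEquiv.toMonoidHom (φ0 ε)) =
      (MulEquiv.toMonoidHom (MulAut.conj (f₂ ε))).comp f₁ := by
  intro ε
  refine MonoidHom.ext fun v => ?_
  simp only [MonoidHom.comp_apply, MulEquiv.coe_toMonoidHom]
  rcases zmod2_cases ε.toAdd with h | h
  · have h2 : f₂ ε = 1 := by
      rw [f₂_apply, h]; norm_num
    have h3 : φ0 ε = 1 := by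
      rw [φ0_apply, h]; norm_num
    simp [h2, h3]
  · have h2 : f₂ ε = pc := by
      rw [f₂_apply, h, show (1 : ZMod 2).val = 1 from rfl, pow_one]
    have h3 : φ0 ε = sw := by
      rw [φ0_apply, h, show (1 : ZMod 2).val = 1 from rfl, pow_one]
    rw [h2, h3]
    rw [f₁_apply, f₁_apply, MulAut.conj_apply, sw_toAdd]
    calc pa ^ v.toAdd.2 * pb ^ v.toAdd.1
        = pb ^ v.toAdd.1 * pa ^ v.toAdd.2 :=
          (commab.zpow_zpow _ _).eq
      _ = (pc * pa * pc⁻¹) ^ v.toAdd.1 * (pc * pb * pc⁻¹) ^ v.toAdd.2 := by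
          rw [hcac, hcbc]
      _ = pc * (pa ^ v.toAdd.1 * pb ^ v.toAdd.2) * pc⁻¹ := by
          rw [← MulAut.conj_apply pc pa, ← MulAut.conj_apply pc pb, ← map_zpow, ← map_zpow,
            ← map_mul, MulAut.conj_apply]

def ψ : GG →* P := SemidirectProduct.lift f₁ f₂ compat

def fgen : Fin 3 → GG
  | 0 => A
  | 1 => B
  | 2 => C

lemma hCC : C * C = 1 := by
  rw [C, ← map_mul, ← ofAdd_add, show ((1:ZMod 2)+1) = 0 from rfl, ofAdd_zero, map_one]

lemma hrels : ∀ r ∈ omegaRels, FreeGroup.lift fgen r = 1 := by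
  intro r hr
  simp only [omegaRels, Set.mem_insert_iff, Set.mem_singleton_iff] at hr
  rcases hr with rfl | rfl | rfl
  · simp only [map_mul, FreeGroup.lift_apply_of]
    exact hCC
  · simp only [map_mul, map_inv, FreeGroup.lift_apply_of]
    rw [mul_inv_eq_one, mul_inv_eq_iff_eq_mul]
    show A * B = B * A
    rw [A, B, ← map_mul (f := (inl : Multiplicative (ℤ × ℤ) →* GG)),
      ← map_mul (f := (inl : Multiplicative (ℤ × ℤ) →* GG)), mul_comm]
  · simp only [map_mul, map_inv, FreeGroup.lift_apply_of]
    rw [mul_inv_eq_one, mul_inv_eq_iff_eq_mul]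
    show C * A = B * C
    have h1 : B = C * A * C⁻¹ := by
      have h := SemidirectProduct.inl_aut (φ := φ0) (ofAdd (1:ZMod 2)) (ofAdd ((1:ℤ), (0:ℤ)))
      rw [φ0_one] at h
      rw [B, C, A, ← map_inv]
      exact h
    rw [h1]; group

def π' : P →* GG := PresentedGroup.toGroup hrels

lemma π'_pa : π' pa = A := PresentedGroup.toGroup.of hrels
lemma π'_pb : π' pb = B := PresentedGroup.toGroup.of hrels
lemma π'_pc : π' pc = C := PresentedGroup.toGroup.of hrels

lemma ψ_A : ψ A = pa := by
  rw [A, show ψ (inl (ofAdd ((1:ℤ), (0:ℤ)))) = f₁ (ofAdd (1, 0)) from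
    SemidirectProduct.lift_inl f₁ f₂ compat _, f₁_apply]
  simp

lemma ψ_B : ψ B = pb := by
  rw [B, show ψ (inl (ofAdd ((0:ℤ), (1:ℤ)))) = f₁ (ofAdd (0, 1)) from
    SemidirectProduct.lift_inl f₁ f₂ compat _, f₁_apply]
  simp

lemma ψ_C : ψ C = pc := by
  rw [C, show ψ (inr (ofAdd (1:ZMod 2))) = f₂ (ofAdd 1) from
    SemidirectProduct.lift_inr f₁ f₂ compat _, f₂_apply,
    show ((ofAdd (1:ZMod 2)).toAdd).val = 1 from rfl, pow_one]

lemma comp1 : ψ.comp π' = MonoidHom.id P := by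
  apply PresentedGroup.ext
  intro x
  fin_cases x
  · show ψ (π' pa) = pa; rw [π'_pa, ψ_A]
  · show ψ (π' pb) = pb; rw [π'_pb, ψ_B]
  · show ψ (π' pc) = pc; rw [π'_pc, ψ_C]

lemma comp2 : π'.comp ψ = MonoidHom.id GG := by
  refine MonoidHom.ext fun g => ?_
  show π' (ψ g) = g
  conv_lhs => rw [← inl_left_mul_inr_right g]
  rw [map_mul, map_mul]
  conv_rhs => rw [← inl_left_mul_inr_right g]
  congr 1
  · rw [inl_decomp, map_mul, map_zpow, map_zpow, map_mul, map_zpow, map_zpow,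
      ψ_A, ψ_B, π'_pa, π'_pb, ← inl_decomp]
  · rcases zmod2_cases (toAdd g.right) with h | h
    · have h1 : g.right = 1 := by apply Multiplicative.toAdd.injective; simpa using h
      rw [h1, map_one, map_one, map_one]
    · have h1 : g.right = ofAdd 1 := by apply Multiplicative.toAdd.injective; simpa using h
      rw [h1, show inr (φ := φ0) (ofAdd 1) = C from rfl, ψ_C, π'_pc]

/-- The presented group is isomorphic to the semidirect product. -/
def iso2 : P ≃* GG := MonoidHom.toMulEquiv π' ψ comp1 comp2

end Stmt14

/-- The transition group of `Ω`, i.e. the subgroup of `Equiv.Perm (ℤ × ZMod 2)` generated by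
`alpha, beta, gamma`, is isomorphic to `⟨a, b, c ∣ c² = 1, ab = ba, ca = bc⟩`; in particular
it is a semidirect product `(ℤ × ℤ) ⋊ ZMod 2`, the nontrivial element of `ZMod 2` acting by
swapping the coordinates. -/
theorem stmt14 :
    Nonempty
      ((Subgroup.closure {alpha, beta, gamma} : Subgroup (Equiv.Perm (ℤ × ZMod 2))) ≃*
        PresentedGroup omegaRels) ∧
    ∃ φ : Multiplicative (ZMod 2) →* MulAut (Multiplicative (ℤ × ℤ)),
      φ (Multiplicative.ofAdd 1) =
        AddEquiv.toMultiplicative (AddEquiv.prodComm : ℤ × ℤ ≃+ ℤ × ℤ) ∧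
      Nonempty
        ((Subgroup.closure {alpha, beta, gamma} : Subgroup (Equiv.Perm (ℤ × ZMod 2))) ≃*
          (Multiplicative (ℤ × ℤ) ⋊[φ] Multiplicative (ZMod 2))) := by
  exact ⟨⟨Stmt14.iso1.trans Stmt14.iso2.symm⟩, Stmt14.φ0, Stmt14.φ0_one, ⟨Stmt14.iso1⟩⟩
end
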